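/- Let W : X1 × X2 → Y be a MAC on finite alphabets, let k1, k2, ℓ be positive integers, and let P(x1,x2,j|i1,i2,y) (x1∈X1, x2∈X2, j∈[ℓ], i1∈[k1], i2∈[k2], y∈Y) be a tripartite non-signaling box with outputs x1, x2, j and inputs i1, i2, y. Define the concatenated MAC W[P] : [k1] × [k2] → [ℓ] by W[P](j|i1,i2) := Σ_{x1,x2,y} W(y|x1,x2) P(x1,x2,j|i1,i2,y). Then the (unassisted) capacity region of W[P] is contained in the non-signaling assisted capacity region of W: C(W[P]) ⊆ C^NS(W). -/

import Mathlib

open Finset Filter Topology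

section Defs

variable {X1 X2 Y : Type*}

/-- The `n`-fold memoryless extension `W^{⊗n}` of a multiple-access channel `W`. -/
def macPow (n : ℕ) (W : X1 → X2 → Y → ℝ) :
    (Fin n → X1) → (Fin n → X2) → (Fin n → Y) → ℝ :=
  fun x1 x2 y => ∏ i, W (x1 i) (x2 i) (y i)

/-- A tripartite non-signaling box `P(x1,x2,j|i1,i2,y)` with decoder output alphabet
`J`.  Arguments of `P` are in the order `x1 x2 j i1 i2 y`. -/
def IsNSBox [Fintype X1] [Fintype X2] [Fintype Y] {J : Type*} [Fintype J] (k1 k2 : ℕ)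
    (P : X1 → X2 → J → Fin k1 → Fin k2 → Y → ℝ) : Prop :=
  (∀ x1 x2 j i1 i2 y, 0 ≤ P x1 x2 j i1 i2 y) ∧
  (∀ i1 i2 y, ∑ x1, ∑ x2, ∑ j, P x1 x2 j i1 i2 y = 1) ∧
  (∀ x2 j i1 i1' i2 y, ∑ x1, P x1 x2 j i1 i2 y = ∑ x1, P x1 x2 j i1' i2 y) ∧
  (∀ x1 j i1 i2 i2' y, ∑ x2, P x1 x2 j i1 i2 y = ∑ x2, P x1 x2 j i1 i2' y) ∧
  (∀ x1 x2 i1 i2 y y', ∑ j, P x1 x2 j i1 i2 y = ∑ j, P x1 x2 j i1 i2 y')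

/-- `S(W,k1,k2)`: maximum joint success probability with classical (unassisted)
stochastic encoders and decoder. -/
noncomputable def S [Fintype X1] [Fintype X2] [Fintype Y]
    (W : X1 → X2 → Y → ℝ) (k1 k2 : ℕ) : ℝ :=
  sSup {s : ℝ | ∃ (e1 : Fin k1 → X1 → ℝ) (e2 : Fin k2 → X2 → ℝ)
      (d : Y → Fin k1 → Fin k2 → ℝ),
    (∀ i1 x1, 0 ≤ e1 i1 x1) ∧ (∀ i1, ∑ x1, e1 i1 x1 = 1) ∧
    (∀ i2 x2, 0 ≤ e2 i2 x2) ∧ (∀ i2, ∑ x2, e2 i2 x2 = 1) ∧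
    (∀ y j1 j2, 0 ≤ d y j1 j2) ∧ (∀ y, ∑ j1, ∑ j2, d y j1 j2 = 1) ∧
    s = (1 / ((k1 : ℝ) * (k2 : ℝ))) * ∑ i1, ∑ i2, ∑ x1, ∑ x2, ∑ y,
      W x1 x2 y * e1 i1 x1 * e2 i2 x2 * d y i1 i2}

/-- `S^{NS}(W,k1,k2)`: maximum joint success probability with (tripartite)
non-signaling assistance, i.e. with decoder output alphabet `[k1] × [k2]`. -/
noncomputable def SNS [Fintype X1] [Fintype X2] [Fintype Y]
    (W : X1 → X2 → Y → ℝ) (k1 k2 : ℕ) : ℝ :=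
  sSup {s : ℝ | ∃ P : X1 → X2 → Fin k1 × Fin k2 → Fin k1 → Fin k2 → Y → ℝ,
    IsNSBox k1 k2 P ∧
    s = (1 / ((k1 : ℝ) * (k2 : ℝ))) * ∑ i1, ∑ i2, ∑ x1, ∑ x2, ∑ y,
      W x1 x2 y * P x1 x2 (i1, i2) i1 i2 y}

/-- `⌈2^{R n}⌉`, the number of messages at rate `R` for blocklength `n`. -/
noncomputable def nMsg (R : ℝ) (n : ℕ) : ℕ := ⌈(2 : ℝ) ^ (R * (n : ℝ))⌉₊

/-- The (unassisted) capacity region `C(W)`. -/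
noncomputable def capacityRegion [Fintype X1] [Fintype X2] [Fintype Y]
    (W : X1 → X2 → Y → ℝ) : Set (ℝ × ℝ) :=
  closure {p : ℝ × ℝ |
    Tendsto (fun n : ℕ => S (macPow n W) (nMsg p.1 n) (nMsg p.2 n)) atTop (𝓝 1)}

/-- The non-signaling assisted capacity region `C^{NS}(W)`. -/
noncomputable def capacityRegionNS [Fintype X1] [Fintype X2] [Fintype Y]
    (W : X1 → X2 → Y → ℝ) : Set (ℝ × ℝ) :=
  closure {p : ℝ × ℝ |
    Tendsto (fun n : ℕ => SNS (macPow n W) (nMsg p.1 n) (nMsg p.2 n)) atTop (𝓝 1)}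

/-- The concatenated MAC `W[P] : [k1] × [k2] → [ℓ]` obtained by composing `W` with a
non-signaling box `P`. -/
noncomputable def concatMAC [Fintype X1] [Fintype X2] [Fintype Y] {k1 k2 ℓ : ℕ}
    (W : X1 → X2 → Y → ℝ) (P : X1 → X2 → Fin ℓ → Fin k1 → Fin k2 → Y → ℝ) :
    Fin k1 → Fin k2 → Fin ℓ → ℝ :=
  fun i1 i2 j => ∑ x1, ∑ x2, ∑ y, W x1 x2 y * P x1 x2 j i1 i2 y

end Defs

private lemma sum_push {α β : Type*} [Fintype α] [Fintype β] (c : α → ℝ) (f : α → β → ℝ) :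
    ∑ x : β, ∑ a : α, c a * f a x = ∑ a : α, c a * ∑ x : β, f a x := by
  rw [Finset.sum_comm]
  exact Finset.sum_congr rfl fun a _ => by rw [Finset.mul_sum]

private lemma sum_push' {α β : Type*} [Fintype α] [Fintype β] (c : α → ℝ) (f : α → β → ℝ) :
    ∑ x : β, ∑ a : α, f a x * c a = ∑ a : α, (∑ x : β, f a x) * c a := by
  rw [Finset.sum_comm]
  exact Finset.sum_congr rfl fun a _ => by rw [Finset.sum_mul]

private lemma pushQ {A K1 K2 L : Type*} [Fintype A] [Fintype K1] [Fintype K2] [Fintype L]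
    (c1 : K1 → ℝ) (c2 : K2 → ℝ) (g : K1 → K2 → L → A → ℝ) (dd : L → ℝ) :
    ∑ x : A, ∑ a1 : K1, c1 a1 * ∑ a2 : K2, c2 a2 * ∑ b : L, g a1 a2 b x * dd b
      = ∑ a1 : K1, c1 a1 * ∑ a2 : K2, c2 a2 * ∑ b : L, (∑ x : A, g a1 a2 b x) * dd b := by
  rw [sum_push]
  refine Finset.sum_congr rfl fun a1 _ => ?_
  congr 1
  rw [sum_push]
  refine Finset.sum_congr rfl fun a2 _ => ?_
  congr 1
  exact sum_push' _ _

private lemma pushQ2 {A K1 K2 : Type*} [Fintype A] [Fintype K1] [Fintype K2]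
    (c1 : K1 → ℝ) (c2 : K2 → ℝ) (h : K1 → K2 → A → ℝ) :
    ∑ x : A, ∑ a1 : K1, c1 a1 * ∑ a2 : K2, c2 a2 * h a1 a2 x
      = ∑ a1 : K1, c1 a1 * ∑ a2 : K2, c2 a2 * ∑ x : A, h a1 a2 x := by
  rw [sum_push]
  refine Finset.sum_congr rfl fun a1 _ => ?_
  congr 1
  exact sum_push _ _

private lemma pushQj {K1 K2 L J : Type*} [Fintype K1] [Fintype K2] [Fintype L] [Fintype J]
    (c1 : K1 → ℝ) (c2 : K2 → ℝ) (g : K1 → K2 → L → ℝ) (dd : L → J → ℝ) :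
    ∑ j : J, ∑ a1 : K1, c1 a1 * ∑ a2 : K2, c2 a2 * ∑ b : L, g a1 a2 b * dd b j
      = ∑ a1 : K1, c1 a1 * ∑ a2 : K2, c2 a2 * ∑ b : L, g a1 a2 b * ∑ j : J, dd b j := by
  rw [sum_push]
  refine Finset.sum_congr rfl fun a1 _ => ?_
  congr 1
  rw [sum_push]
  refine Finset.sum_congr rfl fun a2 _ => ?_
  congr 1
  rw [Finset.sum_comm]
  exact Finset.sum_congr rfl fun b _ => by rw [Finset.mul_sum]

private lemma sum_fn_prod {n : ℕ} {X : Type*} [Fintype X] (f : Fin n → X → ℝ) :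
    ∑ g : Fin n → X, ∏ t, f t (g t) = ∏ t, ∑ c, f t c :=
  (Fintype.prod_sum f).symm

private lemma sns_bound {A B C : Type*} [Fintype A] [Fintype B] [Fintype C]
    (V : A → B → C → ℝ) (hV0 : ∀ a b c, 0 ≤ V a b c) (hV1 : ∀ a b, ∑ c, V a b c = 1)
    {m1 m2 : ℕ}
    {s : ℝ} (hs : ∃ P : A → B → Fin m1 × Fin m2 → Fin m1 → Fin m2 → C → ℝ,
      IsNSBox m1 m2 P ∧ s = (1 / ((m1:ℝ)*(m2:ℝ))) * ∑ i1, ∑ i2, ∑ x1, ∑ x2, ∑ y,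
        V x1 x2 y * P x1 x2 (i1, i2) i1 i2 y) : s ≤ 1 := by
  obtain ⟨P, ⟨hP0, hPn, _, _, hPy⟩, rfl⟩ := hs
  have hT : ∀ i1 i2, ∑ x1, ∑ x2, ∑ y, V x1 x2 y * P x1 x2 (i1,i2) i1 i2 y ≤ 1 := by
    intro i1 i2
    cases isEmpty_or_nonempty C with
    | inl h => simp
    | inr h =>
      obtain ⟨y0⟩ := h
      calc ∑ x1, ∑ x2, ∑ y, V x1 x2 y * P x1 x2 (i1,i2) i1 i2 y
          ≤ ∑ x1, ∑ x2, ∑ y, V x1 x2 y * ∑ j, P x1 x2 j i1 i2 y0 := by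
            refine Finset.sum_le_sum fun x1 _ => Finset.sum_le_sum fun x2 _ =>
              Finset.sum_le_sum fun y _ => ?_
            have h1 : P x1 x2 (i1,i2) i1 i2 y ≤ ∑ j, P x1 x2 j i1 i2 y :=
              Finset.single_le_sum (fun j _ => hP0 x1 x2 j i1 i2 y) (Finset.mem_univ _)
            rw [hPy x1 x2 i1 i2 y y0] at h1
            exact mul_le_mul_of_nonneg_left h1 (hV0 x1 x2 y)
        _ = ∑ x1, ∑ x2, ∑ j, P x1 x2 j i1 i2 y0 := by
            refine Finset.sum_congr rfl fun x1 _ => Finset.sum_congr rfl fun x2 _ => ?_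
            rw [← Finset.sum_mul, hV1, one_mul]
        _ = 1 := hPn i1 i2 y0
  have hsum : ∑ i1 : Fin m1, ∑ i2 : Fin m2, ∑ x1, ∑ x2, ∑ y,
      V x1 x2 y * P x1 x2 (i1,i2) i1 i2 y ≤ (m1:ℝ) * (m2:ℝ) := by
    calc ∑ i1 : Fin m1, ∑ i2 : Fin m2, ∑ x1, ∑ x2, ∑ y, V x1 x2 y * P x1 x2 (i1,i2) i1 i2 y
        ≤ ∑ _i1 : Fin m1, ∑ _i2 : Fin m2, (1:ℝ) :=
          Finset.sum_le_sum fun i1 _ => Finset.sum_le_sum fun i2 _ => hT i1 i2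
      _ = (m1:ℝ) * (m2:ℝ) := by simp [Finset.sum_const, Finset.card_univ]
  rcases eq_or_ne ((m1:ℝ) * (m2:ℝ)) 0 with hN | hN
  · rw [hN]; simp
  · have hNpos : 0 < (m1:ℝ) * (m2:ℝ) := lt_of_le_of_ne (by positivity) (Ne.symm hN)
    calc (1 / ((m1:ℝ)*(m2:ℝ))) * ∑ i1, ∑ i2, ∑ x1, ∑ x2, ∑ y,
          V x1 x2 y * P x1 x2 (i1,i2) i1 i2 y
        ≤ (1 / ((m1:ℝ)*(m2:ℝ))) * ((m1:ℝ)*(m2:ℝ)) :=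
          mul_le_mul_of_nonneg_left hsum (by positivity)
      _ = 1 := by field_simp; exact div_self hN

private lemma s_set_nonempty {A B C : Type*} [Fintype A] [Fintype B] [Fintype C]
    [Nonempty A] [Nonempty B] (V : A → B → C → ℝ) {m1 m2 : ℕ} (hm1 : 0 < m1) (hm2 : 0 < m2) :
    Set.Nonempty {s : ℝ | ∃ (e1 : Fin m1 → A → ℝ) (e2 : Fin m2 → B → ℝ)
      (d : C → Fin m1 → Fin m2 → ℝ),
    (∀ i1 x1, 0 ≤ e1 i1 x1) ∧ (∀ i1, ∑ x1, e1 i1 x1 = 1) ∧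
    (∀ i2 x2, 0 ≤ e2 i2 x2) ∧ (∀ i2, ∑ x2, e2 i2 x2 = 1) ∧
    (∀ y j1 j2, 0 ≤ d y j1 j2) ∧ (∀ y, ∑ j1, ∑ j2, d y j1 j2 = 1) ∧
    s = (1 / ((m1 : ℝ) * (m2 : ℝ))) * ∑ i1, ∑ i2, ∑ x1, ∑ x2, ∑ y,
      V x1 x2 y * e1 i1 x1 * e2 i2 x2 * d y i1 i2} := by
  have hA : ((Fintype.card A : ℝ)) ≠ 0 := Nat.cast_ne_zero.mpr Fintype.card_pos.ne'
  have hB : ((Fintype.card B : ℝ)) ≠ 0 := Nat.cast_ne_zero.mpr Fintype.card_pos.ne'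
  have hm : ((m1:ℝ) * (m2:ℝ)) ≠ 0 := by positivity
  refine ⟨_, fun _ _ => (Fintype.card A : ℝ)⁻¹, fun _ _ => (Fintype.card B : ℝ)⁻¹,
    fun _ _ _ => ((m1:ℝ) * (m2:ℝ))⁻¹, ?_, ?_, ?_, ?_, ?_, ?_, rfl⟩
  · intro _ _; positivity
  · intro _; rw [Finset.sum_const, Finset.card_univ, nsmul_eq_mul, mul_inv_cancel₀ hA]
  · intro _ _; positivity
  · intro _; rw [Finset.sum_const, Finset.card_univ, nsmul_eq_mul, mul_inv_cancel₀ hB]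
  · intro _ _ _; positivity
  · intro _
    rw [Finset.sum_const, Finset.sum_const, Finset.card_univ, Finset.card_univ,
      Fintype.card_fin, Fintype.card_fin, nsmul_eq_mul, nsmul_eq_mul]
    field_simp

private lemma key {X1 X2 Y : Type*} [Fintype X1] [Fintype X2] [Fintype Y]
    (W : X1 → X2 → Y → ℝ)
    (hW0 : ∀ x1 x2 y, 0 ≤ W x1 x2 y)
    (hW1 : ∀ x1 x2, ∑ y, W x1 x2 y = 1)
    {k1 k2 ℓ : ℕ} (hk1 : 0 < k1) (hk2 : 0 < k2)
    (P : X1 → X2 → Fin ℓ → Fin k1 → Fin k2 → Y → ℝ)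
    (hP : IsNSBox k1 k2 P)
    (n m1 m2 : ℕ) (hm1 : 0 < m1) (hm2 : 0 < m2) :
    S (macPow n (concatMAC W P)) m1 m2 ≤ SNS (macPow n W) m1 m2 := by
  obtain ⟨hP0, hPn, hPx1, hPx2, hPy⟩ := hP
  haveI : Nonempty (Fin k1) := ⟨⟨0, hk1⟩⟩
  haveI : Nonempty (Fin k2) := ⟨⟨0, hk2⟩⟩
  unfold S SNS
  apply csSup_le_csSup
  · refine ⟨1, fun s hs => sns_bound (macPow n W) ?_ ?_ hs⟩
    · intro a b c
      exact Finset.prod_nonneg fun t _ => hW0 _ _ _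
    · intro a b
      show ∑ y : Fin n → Y, ∏ t, W (a t) (b t) (y t) = 1
      rw [← Fintype.prod_sum (fun t w => W (a t) (b t) w)]
      exact Finset.prod_eq_one fun t _ => hW1 _ _
  · exact s_set_nonempty (macPow n (concatMAC W P)) hm1 hm2
  · rintro s ⟨e1, e2, d, he10, he11, he20, he21, hd0, hd1, rfl⟩
    -- the composed non-signaling box
    have h0 : ∀ (x1 : Fin n → X1) (x2 : Fin n → X2) (j : Fin m1 × Fin m2) i1 i2
        (y : Fin n → Y), 0 ≤ ∑ a1 : Fin n → Fin k1, e1 i1 a1 * ∑ a2 : Fin n → Fin k2,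
          e2 i2 a2 * ∑ b : Fin n → Fin ℓ,
            (∏ t, P (x1 t) (x2 t) (b t) (a1 t) (a2 t) (y t)) * d b j.1 j.2 := by
      intro x1 x2 j i1 i2 y
      refine Finset.sum_nonneg fun a1 _ => mul_nonneg (he10 _ _)
        (Finset.sum_nonneg fun a2 _ => mul_nonneg (he20 _ _)
          (Finset.sum_nonneg fun b _ => mul_nonneg
            (Finset.prod_nonneg fun t _ => hP0 _ _ _ _ _ _) (hd0 _ _ _)))
    have hj : ∀ (x1 : Fin n → X1) (x2 : Fin n → X2) i1 i2 (y : Fin n → Y),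
        (∑ j : Fin m1 × Fin m2, ∑ a1 : Fin n → Fin k1, e1 i1 a1 *
          ∑ a2 : Fin n → Fin k2, e2 i2 a2 * ∑ b : Fin n → Fin ℓ,
            (∏ t, P (x1 t) (x2 t) (b t) (a1 t) (a2 t) (y t)) * d b j.1 j.2)
        = ∑ a1 : Fin n → Fin k1, e1 i1 a1 * ∑ a2 : Fin n → Fin k2, e2 i2 a2 *
            ∏ t, ∑ w, P (x1 t) (x2 t) w (a1 t) (a2 t) (y t) := by
      intro x1 x2 i1 i2 y
      rw [pushQj]
      refine Finset.sum_congr rfl fun a1 _ => ?_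
      congr 1
      refine Finset.sum_congr rfl fun a2 _ => ?_
      congr 1
      calc ∑ b : Fin n → Fin ℓ, (∏ t, P (x1 t) (x2 t) (b t) (a1 t) (a2 t) (y t)) *
              ∑ j : Fin m1 × Fin m2, d b j.1 j.2
          = ∑ b : Fin n → Fin ℓ, ∏ t, P (x1 t) (x2 t) (b t) (a1 t) (a2 t) (y t) := by
            refine Finset.sum_congr rfl fun b _ => ?_
            have h1 : ∑ j : Fin m1 × Fin m2, d b j.1 j.2 = 1 := by
              rw [Fintype.sum_prod_type]; exact hd1 b
            rw [h1, mul_one]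
        _ = ∏ t, ∑ w, P (x1 t) (x2 t) w (a1 t) (a2 t) (y t) :=
            sum_fn_prod fun t w => P (x1 t) (x2 t) w (a1 t) (a2 t) (y t)
    have hnorm : ∀ i1 i2 (y : Fin n → Y),
        (∑ x1 : Fin n → X1, ∑ x2 : Fin n → X2, ∑ j : Fin m1 × Fin m2,
          ∑ a1 : Fin n → Fin k1, e1 i1 a1 * ∑ a2 : Fin n → Fin k2, e2 i2 a2 *
            ∑ b : Fin n → Fin ℓ,
              (∏ t, P (x1 t) (x2 t) (b t) (a1 t) (a2 t) (y t)) * d b j.1 j.2) = 1 := by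
      intro i1 i2 y
      have h1 : ∀ (a1 : Fin n → Fin k1) (a2 : Fin n → Fin k2),
          (∏ t, ∑ u, ∑ v, ∑ w, P u v w (a1 t) (a2 t) (y t)) = 1 :=
        fun a1 a2 => Finset.prod_eq_one fun t _ => hPn (a1 t) (a2 t) (y t)
      calc (∑ x1 : Fin n → X1, ∑ x2 : Fin n → X2, ∑ j : Fin m1 × Fin m2,
            ∑ a1 : Fin n → Fin k1, e1 i1 a1 * ∑ a2 : Fin n → Fin k2, e2 i2 a2 *
              ∑ b : Fin n → Fin ℓ,
                (∏ t, P (x1 t) (x2 t) (b t) (a1 t) (a2 t) (y t)) * d b j.1 j.2)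
          = ∑ x1 : Fin n → X1, ∑ x2 : Fin n → X2, ∑ a1 : Fin n → Fin k1, e1 i1 a1 *
              ∑ a2 : Fin n → Fin k2, e2 i2 a2 *
                ∏ t, ∑ w, P (x1 t) (x2 t) w (a1 t) (a2 t) (y t) :=
            Finset.sum_congr rfl fun x1 _ => Finset.sum_congr rfl fun x2 _ =>
              hj x1 x2 i1 i2 y
        _ = ∑ x1 : Fin n → X1, ∑ a1 : Fin n → Fin k1, e1 i1 a1 *
              ∑ a2 : Fin n → Fin k2, e2 i2 a2 *
                ∏ t, ∑ v, ∑ w, P (x1 t) v w (a1 t) (a2 t) (y t) := by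
            refine Finset.sum_congr rfl fun x1 _ => ?_
            rw [pushQ2]
            refine Finset.sum_congr rfl fun a1 _ => ?_
            congr 1
            refine Finset.sum_congr rfl fun a2 _ => ?_
            congr 1
            exact sum_fn_prod fun t v => ∑ w, P (x1 t) v w (a1 t) (a2 t) (y t)
        _ = ∑ a1 : Fin n → Fin k1, e1 i1 a1 * ∑ a2 : Fin n → Fin k2, e2 i2 a2 *
              ∏ t, ∑ u, ∑ v, ∑ w, P u v w (a1 t) (a2 t) (y t) := by
            rw [pushQ2]
            refine Finset.sum_congr rfl fun a1 _ => ?_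
            congr 1
            refine Finset.sum_congr rfl fun a2 _ => ?_
            congr 1
            exact sum_fn_prod fun t u => ∑ v, ∑ w, P u v w (a1 t) (a2 t) (y t)
        _ = ∑ a1 : Fin n → Fin k1, e1 i1 a1 * ∑ a2 : Fin n → Fin k2, e2 i2 a2 := by
            refine Finset.sum_congr rfl fun a1 _ => ?_
            congr 1
            refine Finset.sum_congr rfl fun a2 _ => ?_
            rw [h1 a1 a2, mul_one]
        _ = 1 := by
            refine Eq.trans (Finset.sum_congr rfl fun a1 _ => ?_) (he11 i1)
            rw [he21 i2, mul_one]
    have hmar1 : ∀ (x2 : Fin n → X2) (j : Fin m1 × Fin m2) i1 i2 (y : Fin n → Y),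
        (∑ x1 : Fin n → X1, ∑ a1 : Fin n → Fin k1, e1 i1 a1 *
          ∑ a2 : Fin n → Fin k2, e2 i2 a2 * ∑ b : Fin n → Fin ℓ,
            (∏ t, P (x1 t) (x2 t) (b t) (a1 t) (a2 t) (y t)) * d b j.1 j.2)
        = ∑ a2 : Fin n → Fin k2, e2 i2 a2 * ∑ b : Fin n → Fin ℓ,
            (∏ t, ∑ v, P v (x2 t) (b t) (⟨0, hk1⟩ : Fin k1) (a2 t) (y t)) * d b j.1 j.2 := by
      intro x2 j i1 i2 y
      rw [pushQ]
      calc (∑ a1 : Fin n → Fin k1, e1 i1 a1 * ∑ a2 : Fin n → Fin k2, e2 i2 a2 *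
            ∑ b : Fin n → Fin ℓ,
              (∑ x1 : Fin n → X1, ∏ t, P (x1 t) (x2 t) (b t) (a1 t) (a2 t) (y t)) *
                d b j.1 j.2)
          = ∑ a1 : Fin n → Fin k1, e1 i1 a1 * ∑ a2 : Fin n → Fin k2, e2 i2 a2 *
              ∑ b : Fin n → Fin ℓ,
                (∏ t, ∑ v, P v (x2 t) (b t) (⟨0, hk1⟩ : Fin k1) (a2 t) (y t)) *
                  d b j.1 j.2 := by
            refine Finset.sum_congr rfl fun a1 _ => ?_
            congr 1
            refine Finset.sum_congr rfl fun a2 _ => ?_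
            congr 1
            refine Finset.sum_congr rfl fun b _ => ?_
            congr 1
            rw [sum_fn_prod fun t v => P v (x2 t) (b t) (a1 t) (a2 t) (y t)]
            exact Finset.prod_congr rfl fun t _ => hPx1 (x2 t) (b t) (a1 t) _ (a2 t) (y t)
        _ = ∑ a2 : Fin n → Fin k2, e2 i2 a2 * ∑ b : Fin n → Fin ℓ,
              (∏ t, ∑ v, P v (x2 t) (b t) (⟨0, hk1⟩ : Fin k1) (a2 t) (y t)) *
                d b j.1 j.2 := by
            rw [← Finset.sum_mul, he11, one_mul]
    have hmar2 : ∀ (x1 : Fin n → X1) (j : Fin m1 × Fin m2) i1 i2 (y : Fin n → Y),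
        (∑ x2 : Fin n → X2, ∑ a1 : Fin n → Fin k1, e1 i1 a1 *
          ∑ a2 : Fin n → Fin k2, e2 i2 a2 * ∑ b : Fin n → Fin ℓ,
            (∏ t, P (x1 t) (x2 t) (b t) (a1 t) (a2 t) (y t)) * d b j.1 j.2)
        = ∑ a1 : Fin n → Fin k1, e1 i1 a1 * ∑ b : Fin n → Fin ℓ,
            (∏ t, ∑ v, P (x1 t) v (b t) (a1 t) (⟨0, hk2⟩ : Fin k2) (y t)) * d b j.1 j.2 := by
      intro x1 j i1 i2 y
      rw [pushQ]
      refine Finset.sum_congr rfl fun a1 _ => ?_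
      congr 1
      calc (∑ a2 : Fin n → Fin k2, e2 i2 a2 * ∑ b : Fin n → Fin ℓ,
            (∑ x2 : Fin n → X2, ∏ t, P (x1 t) (x2 t) (b t) (a1 t) (a2 t) (y t)) *
              d b j.1 j.2)
          = ∑ a2 : Fin n → Fin k2, e2 i2 a2 * ∑ b : Fin n → Fin ℓ,
              (∏ t, ∑ v, P (x1 t) v (b t) (a1 t) (⟨0, hk2⟩ : Fin k2) (y t)) *
                d b j.1 j.2 := by
            refine Finset.sum_congr rfl fun a2 _ => ?_
            congr 1
            refine Finset.sum_congr rfl fun b _ => ?_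
            congr 1
            rw [sum_fn_prod fun t v => P (x1 t) v (b t) (a1 t) (a2 t) (y t)]
            exact Finset.prod_congr rfl fun t _ => hPx2 (x1 t) (b t) (a1 t) (a2 t) _ (y t)
        _ = ∑ b : Fin n → Fin ℓ,
              (∏ t, ∑ v, P (x1 t) v (b t) (a1 t) (⟨0, hk2⟩ : Fin k2) (y t)) *
                d b j.1 j.2 := by
            rw [← Finset.sum_mul, he21, one_mul]
    refine ⟨fun x1 x2 j i1 i2 y => ∑ a1 : Fin n → Fin k1, e1 i1 a1 *
      ∑ a2 : Fin n → Fin k2, e2 i2 a2 * ∑ b : Fin n → Fin ℓ,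
        (∏ t, P (x1 t) (x2 t) (b t) (a1 t) (a2 t) (y t)) * d b j.1 j.2,
      ⟨h0, hnorm, fun x2 j i1 i1' i2 y => (hmar1 x2 j i1 i2 y).trans (hmar1 x2 j i1' i2 y).symm,
        fun x1 j i1 i2 i2' y => (hmar2 x1 j i1 i2 y).trans (hmar2 x1 j i1 i2' y).symm,
        fun x1 x2 i1 i2 y y' => by
          rw [hj x1 x2 i1 i2 y, hj x1 x2 i1 i2 y']
          refine Finset.sum_congr rfl fun a1 _ => ?_
          congr 1
          refine Finset.sum_congr rfl fun a2 _ => ?_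
          congr 1
          exact Finset.prod_congr rfl fun t _ =>
            hPy (x1 t) (x2 t) (a1 t) (a2 t) (y t) (y' t)⟩, ?_⟩
    congr 1
    refine Finset.sum_congr rfl fun i1 _ => Finset.sum_congr rfl fun i2 _ => ?_
    show (∑ a1 : Fin n → Fin k1, ∑ a2 : Fin n → Fin k2, ∑ b : Fin n → Fin ℓ,
        macPow n (concatMAC W P) a1 a2 b * e1 i1 a1 * e2 i2 a2 * d b i1 i2)
      = ∑ x1 : Fin n → X1, ∑ x2 : Fin n → X2, ∑ y : Fin n → Y,
          macPow n W x1 x2 y * ∑ a1 : Fin n → Fin k1, e1 i1 a1 *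
            ∑ a2 : Fin n → Fin k2, e2 i2 a2 * ∑ b : Fin n → Fin ℓ,
              (∏ t, P (x1 t) (x2 t) (b t) (a1 t) (a2 t) (y t)) * d b i1 i2
    calc (∑ a1 : Fin n → Fin k1, ∑ a2 : Fin n → Fin k2, ∑ b : Fin n → Fin ℓ,
          macPow n (concatMAC W P) a1 a2 b * e1 i1 a1 * e2 i2 a2 * d b i1 i2)
        = ∑ a1 : Fin n → Fin k1, e1 i1 a1 * ∑ a2 : Fin n → Fin k2, e2 i2 a2 *
            ∑ b : Fin n → Fin ℓ,
              (∑ x1 : Fin n → X1, ∑ x2 : Fin n → X2, ∑ y : Fin n → Y,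
                ∏ t, W (x1 t) (x2 t) (y t) *
                  P (x1 t) (x2 t) (b t) (a1 t) (a2 t) (y t)) * d b i1 i2 := by
          simp only [Finset.mul_sum]
          refine Finset.sum_congr rfl fun a1 _ => Finset.sum_congr rfl fun a2 _ =>
            Finset.sum_congr rfl fun b _ => ?_
          have hfac : macPow n (concatMAC W P) a1 a2 b
              = ∑ x1 : Fin n → X1, ∑ x2 : Fin n → X2, ∑ y : Fin n → Y,
                  ∏ t, W (x1 t) (x2 t) (y t) *
                    P (x1 t) (x2 t) (b t) (a1 t) (a2 t) (y t) := by
            calc macPow n (concatMAC W P) a1 a2 b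
                = ∏ t, ∑ u, ∑ v, ∑ w, W u v w * P u v (b t) (a1 t) (a2 t) w := rfl
              _ = ∑ x1 : Fin n → X1, ∏ t, ∑ v, ∑ w,
                    W (x1 t) v w * P (x1 t) v (b t) (a1 t) (a2 t) w :=
                  (sum_fn_prod fun t u => ∑ v, ∑ w,
                    W u v w * P u v (b t) (a1 t) (a2 t) w).symm
              _ = ∑ x1 : Fin n → X1, ∑ x2 : Fin n → X2, ∏ t, ∑ w,
                    W (x1 t) (x2 t) w * P (x1 t) (x2 t) (b t) (a1 t) (a2 t) w :=
                  Finset.sum_congr rfl fun x1 _ => (sum_fn_prod fun t v => ∑ w,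
                    W (x1 t) v w * P (x1 t) v (b t) (a1 t) (a2 t) w).symm
              _ = ∑ x1 : Fin n → X1, ∑ x2 : Fin n → X2, ∑ y : Fin n → Y,
                    ∏ t, W (x1 t) (x2 t) (y t) *
                      P (x1 t) (x2 t) (b t) (a1 t) (a2 t) (y t) :=
                  Finset.sum_congr rfl fun x1 _ => Finset.sum_congr rfl fun x2 _ =>
                    (sum_fn_prod fun t w =>
                      W (x1 t) (x2 t) w * P (x1 t) (x2 t) (b t) (a1 t) (a2 t) w).symm
          rw [hfac]; ring
      _ = ∑ x1 : Fin n → X1, ∑ a1 : Fin n → Fin k1, e1 i1 a1 *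
            ∑ a2 : Fin n → Fin k2, e2 i2 a2 * ∑ b : Fin n → Fin ℓ,
              (∑ x2 : Fin n → X2, ∑ y : Fin n → Y,
                ∏ t, W (x1 t) (x2 t) (y t) *
                  P (x1 t) (x2 t) (b t) (a1 t) (a2 t) (y t)) * d b i1 i2 :=
          (pushQ _ _ _ _).symm
      _ = ∑ x1 : Fin n → X1, ∑ x2 : Fin n → X2, ∑ a1 : Fin n → Fin k1, e1 i1 a1 *
            ∑ a2 : Fin n → Fin k2, e2 i2 a2 * ∑ b : Fin n → Fin ℓ,
              (∑ y : Fin n → Y, ∏ t, W (x1 t) (x2 t) (y t) *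
                P (x1 t) (x2 t) (b t) (a1 t) (a2 t) (y t)) * d b i1 i2 :=
          Finset.sum_congr rfl fun x1 _ => (pushQ _ _ _ _).symm
      _ = ∑ x1 : Fin n → X1, ∑ x2 : Fin n → X2, ∑ y : Fin n → Y,
            ∑ a1 : Fin n → Fin k1, e1 i1 a1 * ∑ a2 : Fin n → Fin k2, e2 i2 a2 *
              ∑ b : Fin n → Fin ℓ,
                (∏ t, W (x1 t) (x2 t) (y t) *
                  P (x1 t) (x2 t) (b t) (a1 t) (a2 t) (y t)) * d b i1 i2 :=
          Finset.sum_congr rfl fun x1 _ => Finset.sum_congr rfl fun x2 _ =>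
            (pushQ _ _ _ _).symm
      _ = ∑ x1 : Fin n → X1, ∑ x2 : Fin n → X2, ∑ y : Fin n → Y,
            macPow n W x1 x2 y * ∑ a1 : Fin n → Fin k1, e1 i1 a1 *
              ∑ a2 : Fin n → Fin k2, e2 i2 a2 * ∑ b : Fin n → Fin ℓ,
                (∏ t, P (x1 t) (x2 t) (b t) (a1 t) (a2 t) (y t)) * d b i1 i2 := by
          refine Finset.sum_congr rfl fun x1 _ => Finset.sum_congr rfl fun x2 _ =>
            Finset.sum_congr rfl fun y _ => ?_
          show _ = (∏ t, W (x1 t) (x2 t) (y t)) * _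
          simp only [Finset.mul_sum]
          refine Finset.sum_congr rfl fun a1 _ => Finset.sum_congr rfl fun a2 _ =>
            Finset.sum_congr rfl fun b _ => ?_
          rw [Finset.prod_mul_distrib]
          ring

/-- Concatenated codes: for any non-signaling box `P`, the unassisted capacity region
of the concatenated channel `W[P]` is contained in the non-signaling assisted
capacity region of `W`: `C(W[P]) ⊆ C^{NS}(W)`. -/
theorem capacityRegion_concatMAC_subset {X1 X2 Y : Type*}
    [Fintype X1] [Fintype X2] [Fintype Y]
    (W : X1 → X2 → Y → ℝ)
    (hW0 : ∀ x1 x2 y, 0 ≤ W x1 x2 y)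
    (hW1 : ∀ x1 x2, ∑ y, W x1 x2 y = 1)
    (k1 k2 ℓ : ℕ) (hk1 : 0 < k1) (hk2 : 0 < k2) (hℓ : 0 < ℓ)
    (P : X1 → X2 → Fin ℓ → Fin k1 → Fin k2 → Y → ℝ)
    (hP : IsNSBox k1 k2 P) :
    capacityRegion (concatMAC W P) ⊆ capacityRegionNS W := by
  unfold capacityRegion capacityRegionNS
  apply closure_mono
  intro p hp
  simp only [Set.mem_setOf_eq] at hp ⊢
  have hm : ∀ (R : ℝ) (m : ℕ), 0 < nMsg R m := fun R m => Nat.ceil_pos.mpr (by positivity)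
  have hle : ∀ m : ℕ, S (macPow m (concatMAC W P)) (nMsg p.1 m) (nMsg p.2 m)
      ≤ SNS (macPow m W) (nMsg p.1 m) (nMsg p.2 m) :=
    fun m => key W hW0 hW1 hk1 hk2 P hP m _ _ (hm p.1 m) (hm p.2 m)
  have hub : ∀ m : ℕ, SNS (macPow m W) (nMsg p.1 m) (nMsg p.2 m) ≤ 1 := by
    intro m
    unfold SNS
    apply Real.sSup_le
    · intro s hs
      refine sns_bound (macPow m W) ?_ ?_ hs
      · intro a b c
        exact Finset.prod_nonneg fun t _ => hW0 _ _ _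
      · intro a b
        show ∑ y : Fin m → Y, ∏ t, W (a t) (b t) (y t) = 1
        rw [← Fintype.prod_sum (fun t w => W (a t) (b t) w)]
        exact Finset.prod_eq_one fun t _ => hW1 _ _
    · exact zero_le_one
  exact tendsto_of_tendsto_of_tendsto_of_le_of_le hp tendsto_const_nhds hle hub
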